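/- Let f : ℝ → ℝ be twice continuously differentiable with f and its derivatives of polynomial growth, and let Z ~ N(μ, v) with v > 0. Then ∂/∂v E[f(Z)] = (1/2) E[f''(Z)] (one-dimensional Price theorem). -/

import Mathlib

open Real MeasureTheory

/-- One-dimensional Gaussian density with mean `μ` and variance `v`. -/
noncomputable def gaussDensityV (z μ v : ℝ) : ℝ :=
  (1 / Real.sqrt (2 * π * v)) * Real.exp (-(z - μ) ^ 2 / (2 * v))

lemma integrable_npow_mul_exp_neg_mul_sq {b : ℝ} (hb : 0 < b) (m : ℕ) :
    Integrable fun x : ℝ => x ^ m * Real.exp (-b * x ^ 2) := by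
  simp_rw [← Real.rpow_natCast _ m]
  exact integrable_rpow_mul_exp_neg_mul_sq hb
    (lt_of_lt_of_le (by norm_num) (Nat.cast_nonneg m))

lemma integrable_poly_gauss {h : ℝ → ℝ} (hm : AEStronglyMeasurable h)
    {C : ℝ} {n : ℕ} (hbd : ∀ z, |h z| ≤ C * (1 + |z| ^ n)) {b : ℝ} (hb : 0 < b) (μ : ℝ) :
    Integrable fun z => h z * Real.exp (-b * (z - μ) ^ 2) := by
  have hC : 0 ≤ C := by
    have h0 := hbd 0
    have h1 : (0:ℝ) < 1 + |(0:ℝ)| ^ n := by positivity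
    nlinarith [abs_nonneg (h 0)]
  apply Integrable.mono'
    (g := fun z => C * Real.exp (b * μ ^ 2) *
      (2 * Real.exp (-(b/2) * z ^ 2) + z ^ (2*n) * Real.exp (-(b/2) * z ^ 2)))
  · exact (((integrable_exp_neg_mul_sq (by positivity : (0:ℝ) < b/2)).const_mul 2).add
      (integrable_npow_mul_exp_neg_mul_sq (by positivity : (0:ℝ) < b/2) (2*n))).const_mul _
  · exact hm.mul (Continuous.aestronglyMeasurable (by continuity))
  · filter_upwards with z
    have e1 : Real.exp (-b * (z - μ) ^ 2) ≤ Real.exp (b * μ ^ 2) * Real.exp (-(b/2) * z ^ 2) := by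
      rw [← Real.exp_add]
      apply Real.exp_le_exp.mpr
      nlinarith [sq_nonneg (z - 2*μ), hb.le]
    have e2 : |z| ^ n ≤ 1 + z ^ (2*n) := by
      have : z ^ (2*n) = (|z| ^ n) ^ 2 := by
        rw [← abs_pow, sq_abs, ← pow_mul, mul_comm n 2]
      nlinarith [pow_nonneg (abs_nonneg z) n]
    have hz := hbd z
    have hnn : (0:ℝ) ≤ C * (1 + |z| ^ n) := le_trans (abs_nonneg _) hz
    rw [Real.norm_eq_abs, abs_mul, abs_of_pos (Real.exp_pos _)]
    calc |h z| * Real.exp (-b * (z - μ) ^ 2)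
        ≤ (C * (1 + |z| ^ n)) * (Real.exp (b * μ ^ 2) * Real.exp (-(b/2) * z ^ 2)) := by
          apply mul_le_mul hz e1 (Real.exp_pos _).le hnn
      _ ≤ C * ((2 + z ^ (2*n)) * (Real.exp (b * μ ^ 2) * Real.exp (-(b/2) * z ^ 2))) := by
          have h12 : (1 + |z| ^ n) ≤ 2 + z ^ (2*n) := by linarith
          have hexp : (0:ℝ) ≤ Real.exp (b * μ ^ 2) * Real.exp (-(b/2) * z ^ 2) :=
            mul_nonneg (Real.exp_pos _).le (Real.exp_pos _).le
          rw [mul_assoc]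
          exact mul_le_mul_of_nonneg_left (mul_le_mul_of_nonneg_right h12 hexp) hC
      _ = _ := by ring

lemma abs_pow_le_one_add_abs_pow {m n : ℕ} (h : m ≤ n) (x : ℝ) :
    |x| ^ m ≤ 1 + |x| ^ n := by
  rcases le_total |x| 1 with hx | hx
  · have : |x| ^ m ≤ 1 := pow_le_one₀ (abs_nonneg x) hx
    have : (0:ℝ) ≤ |x| ^ n := pow_nonneg (abs_nonneg x) n
    linarith
  · have : |x| ^ m ≤ |x| ^ n := pow_le_pow_right₀ hx h
    linarith

lemma one_add_pow_mul_quad (n : ℕ) (A B c x : ℝ) (hA : 0 ≤ A) (hB : 0 ≤ B) :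
    (1 + |x| ^ n) * (A * (x - c) ^ 2 + B) ≤
      (3 * (2 * A + 2 * A * c ^ 2 + B)) * (1 + |x| ^ (n + 2)) := by
  have h1 : |x| ^ n ≤ 1 + |x| ^ (n + 2) := abs_pow_le_one_add_abs_pow (by omega) x
  have h2 : x ^ 2 ≤ 1 + |x| ^ (n + 2) := by
    have := abs_pow_le_one_add_abs_pow (show 2 ≤ n + 2 by omega) x
    calc x ^ 2 = |x| ^ 2 := (sq_abs x).symm
      _ ≤ _ := this
  have h3 : |x| ^ n * x ^ 2 = |x| ^ (n + 2) := by
    rw [← sq_abs, ← pow_add]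
  have h4 : (x - c) ^ 2 ≤ 2 * x ^ 2 + 2 * c ^ 2 := by nlinarith [sq_nonneg (x + c)]
  have hp : (0:ℝ) ≤ |x| ^ n := pow_nonneg (abs_nonneg x) n
  have hp2 : (0:ℝ) ≤ |x| ^ (n + 2) := pow_nonneg (abs_nonneg x) _
  set P := |x| ^ n with hP
  set Q := |x| ^ (n + 2) with hQ
  have t1 : A * (x - c) ^ 2 ≤ 2 * A * (1 + Q) + 2 * A * c ^ 2 := by
    nlinarith [mul_le_mul_of_nonneg_left h4 hA, mul_le_mul_of_nonneg_left h2 hA]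
  have tPS : P * (x - c) ^ 2 ≤ 2 * Q + 2 * c ^ 2 * P := by
    have := mul_le_mul_of_nonneg_left h4 hp
    nlinarith [h3]
  have t2 : A * (P * (x - c) ^ 2) ≤ 2 * A * Q + 2 * A * c ^ 2 * (1 + Q) := by
    have := mul_le_mul_of_nonneg_left tPS hA
    nlinarith [mul_le_mul_of_nonneg_left h1 (mul_nonneg hA (sq_nonneg c))]
  have t3 : B * P ≤ B * (1 + Q) := mul_le_mul_of_nonneg_left h1 hB
  have e : (1 + P) * (A * (x - c) ^ 2 + B) =
      A * (x - c) ^ 2 + B + A * (P * (x - c) ^ 2) + B * P := by ring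
  rw [e]
  nlinarith [mul_nonneg hA hp2, mul_nonneg hB hp2, sq_nonneg c, hp2,
    mul_nonneg (mul_nonneg hA (sq_nonneg c)) hp2]

lemma bound_mul_quad {f : ℝ → ℝ} {D : ℝ} {n : ℕ} (hD : 0 ≤ D)
    (hb : ∀ z, |f z| ≤ D * (1 + |z| ^ n)) {A B : ℝ} (c : ℝ) (hA : 0 ≤ A) (hB : 0 ≤ B) :
    ∀ z, |f z| * (A * (z - c) ^ 2 + B) ≤
      (D * (3 * (2 * A + 2 * A * c ^ 2 + B))) * (1 + |z| ^ (n + 2)) := by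
  intro z
  have hq : (0:ℝ) ≤ A * (z - c) ^ 2 + B := by positivity
  calc |f z| * (A * (z - c) ^ 2 + B)
      ≤ (D * (1 + |z| ^ n)) * (A * (z - c) ^ 2 + B) :=
        mul_le_mul_of_nonneg_right (hb z) hq
    _ = D * ((1 + |z| ^ n) * (A * (z - c) ^ 2 + B)) := by ring
    _ ≤ D * ((3 * (2 * A + 2 * A * c ^ 2 + B)) * (1 + |z| ^ (n + 2))) :=
        mul_le_mul_of_nonneg_left (one_add_pow_mul_quad n A B c z hA hB) hD
    _ = _ := by ring

/-- reduce real-exponent polynomial growth to natural exponent, with nonneg constant -/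
lemma growth_reduce {f : ℝ → ℝ} (hc : Continuous f) {C k : ℝ}
    (h : ∀ z, |f z| ≤ C * (1 + |z| ^ k)) :
    ∃ D : ℝ, 0 ≤ D ∧ ∀ z, |f z| ≤ D * (1 + |z| ^ (⌈k⌉₊)) := by
  obtain ⟨M, hM⟩ := (isCompact_Icc (a := (-1:ℝ)) (b := 1)).exists_bound_of_continuousOn
    hc.continuousOn
  have hM0 : 0 ≤ M := le_trans (norm_nonneg (f 0)) (hM 0 (by norm_num))
  have hC0 : 0 ≤ C := by
    have h1 := h 1
    have : |(1:ℝ)| ^ k = 1 := by rw [abs_one, Real.one_rpow]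
    rw [this] at h1
    nlinarith [abs_nonneg (f 1)]
  refine ⟨max C M, le_trans hM0 (le_max_right _ _), fun z => ?_⟩
  have hpn : (0:ℝ) ≤ |z| ^ (⌈k⌉₊) := pow_nonneg (abs_nonneg z) _
  rcases le_total |z| 1 with hz | hz
  · have hmem : z ∈ Set.Icc (-1:ℝ) 1 := abs_le.mp hz
    have := hM z hmem
    rw [Real.norm_eq_abs] at this
    nlinarith [le_max_right C M, le_trans hM0 (le_max_right C M)]
  · have hk : |z| ^ k ≤ |z| ^ (⌈k⌉₊ : ℝ) :=
      Real.rpow_le_rpow_of_exponent_le hz (le_trans (Nat.le_ceil k) (le_refl _))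
    rw [Real.rpow_natCast] at hk
    have h1 := h z
    have : C * (1 + |z| ^ k) ≤ C * (1 + |z| ^ (⌈k⌉₊)) := by nlinarith
    have : |f z| ≤ C * (1 + |z| ^ (⌈k⌉₊)) := le_trans h1 this
    nlinarith [le_max_left C M]

open MeasureTheory in
-- derivative in the variance variable
lemma hasDerivAt_gauss_w (z μ : ℝ) {w : ℝ} (hw : 0 < w) :
    HasDerivAt (fun w => gaussDensityV z μ w)
      (gaussDensityV z μ w * ((z - μ) ^ 2 / (2 * w ^ 2) - 1 / (2 * w))) w := by
  have h2πw : (0:ℝ) < 2 * π * w := by positivity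
  have hsq : Real.sqrt (2 * π * w) ≠ 0 := (Real.sqrt_pos.mpr h2πw).ne'
  have h1 : HasDerivAt (fun w : ℝ => 2 * π * w) (2 * π) w := by
    simpa using (hasDerivAt_id w).const_mul (2 * π)
  have h2 : HasDerivAt (fun w : ℝ => Real.sqrt (2 * π * w))
      (1 / (2 * Real.sqrt (2 * π * w)) * (2 * π)) w :=
    (Real.hasDerivAt_sqrt h2πw.ne').comp w h1
  have h3 : HasDerivAt (fun w : ℝ => (Real.sqrt (2 * π * w))⁻¹)
      (-(1 / (2 * Real.sqrt (2 * π * w)) * (2 * π)) / (Real.sqrt (2 * π * w)) ^ 2) w :=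
    h2.inv hsq
  have h4 : HasDerivAt (fun w : ℝ => -(z - μ) ^ 2 / (2 * w))
      ((z - μ) ^ 2 / (2 * w ^ 2)) w := by
    have hne : (2 : ℝ) * w ≠ 0 := by positivity
    have h5 : HasDerivAt (fun w : ℝ => 2 * w) 2 w := by
      simpa using (hasDerivAt_id w).const_mul (2:ℝ)
    have := (h5.inv hne).const_mul (-(z - μ) ^ 2)
    refine this.congr_deriv ?_ <;> field_simp <;> ring
  have h6 : HasDerivAt (fun w : ℝ => Real.exp (-(z - μ) ^ 2 / (2 * w)))
      (Real.exp (-(z - μ) ^ 2 / (2 * w)) * ((z - μ) ^ 2 / (2 * w ^ 2))) w := by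
    exact (Real.hasDerivAt_exp _).comp w h4
  have := h3.mul h6
  simp only [gaussDensityV, one_div]
  refine this.congr_deriv ?_
  have hs2 : (Real.sqrt (2 * π * w)) ^ 2 = 2 * π * w := Real.sq_sqrt h2πw.le
  set s := Real.sqrt (2 * π * w) with hsdef
  rw [hs2]
  field_simp
  ring

-- first derivative in z
lemma hasDerivAt_gauss_z (μ : ℝ) {v : ℝ} (hv : 0 < v) (z : ℝ) :
    HasDerivAt (fun z => gaussDensityV z μ v)
      (gaussDensityV z μ v * (-(z - μ) / v)) z := by
  have hne : (2 : ℝ) * v ≠ 0 := by positivity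
  have h1 : HasDerivAt (fun z : ℝ => -(z - μ) ^ 2 / (2 * v)) (-(z - μ) / v) z := by
    have h0 : HasDerivAt (fun z : ℝ => z - μ) 1 z := (hasDerivAt_id z).sub_const μ
    have := ((h0.pow 2).neg).div_const (2 * v)
    refine this.congr_deriv ?_
    field_simp
    ring
  have h2 := (Real.hasDerivAt_exp _).comp z h1
  have := h2.const_mul (1 / Real.sqrt (2 * π * v))
  simp only [gaussDensityV]
  refine this.congr_deriv ?_
  ring

-- second derivative in z
lemma hasDerivAt_gauss_z' (μ : ℝ) {v : ℝ} (hv : 0 < v) (z : ℝ) :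
    HasDerivAt (fun z => gaussDensityV z μ v * (-(z - μ) / v))
      (gaussDensityV z μ v * ((z - μ) ^ 2 / v ^ 2 - 1 / v)) z := by
  have h1 := hasDerivAt_gauss_z μ hv z
  have h2 : HasDerivAt (fun z : ℝ => -(z - μ) / v) (-1 / v) z := by
    have h0 : HasDerivAt (fun z : ℝ => -(z - μ)) (-1) z :=
      ((hasDerivAt_id z).sub_const μ).neg
    simpa using h0.div_const v
  have := h1.mul h2
  refine this.congr_deriv ?_
  field_simp
  ring


lemma continuous_gaussDensityV (μ w : ℝ) : Continuous fun z => gaussDensityV z μ w := by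
  unfold gaussDensityV
  fun_prop

lemma integrable_poly_mul_gaussDensity {h : ℝ → ℝ} (hm : AEStronglyMeasurable h)
    {C : ℝ} {m : ℕ} (hbd : ∀ z, |h z| ≤ C * (1 + |z| ^ m)) (μ : ℝ) {w : ℝ} (hw : 0 < w) :
    Integrable fun z => h z * gaussDensityV z μ w := by
  have hc : (0:ℝ) ≤ 1 / Real.sqrt (2 * π * w) := by positivity
  have key := integrable_poly_gauss (h := fun z => h z * (1 / Real.sqrt (2 * π * w)))
    (hm.mul_const _) (C := C * (1 / Real.sqrt (2 * π * w))) (n := m)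
    (fun z => by
      rw [abs_mul, abs_of_nonneg hc]
      calc |h z| * (1 / Real.sqrt (2 * π * w))
          ≤ (C * (1 + |z| ^ m)) * (1 / Real.sqrt (2 * π * w)) :=
            mul_le_mul_of_nonneg_right (hbd z) hc
        _ = C * (1 / Real.sqrt (2 * π * w)) * (1 + |z| ^ m) := by ring)
    (b := 1 / (2 * w)) (by positivity) μ
  refine key.congr (Filter.Eventually.of_forall fun z => ?_)
  show h z * (1 / Real.sqrt (2 * π * w)) * Real.exp (-(1 / (2 * w)) * (z - μ) ^ 2) = _
  unfold gaussDensityV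
  rw [show -(1 / (2 * w)) * (z - μ) ^ 2 = -(z - μ) ^ 2 / (2 * w) by ring]
  ring


set_option maxHeartbeats 2000000 in
/-- One-dimensional Price theorem: the derivative of the Gaussian expectation with
respect to the variance equals half the expectation of the second derivative. -/
theorem price_theorem (f : ℝ → ℝ) (hf : ContDiff ℝ 2 f)
    (hgrowth : ∃ C k : ℝ, ∀ z : ℝ,
      |f z| ≤ C * (1 + |z| ^ k) ∧ |deriv f z| ≤ C * (1 + |z| ^ k) ∧
        |deriv (deriv f) z| ≤ C * (1 + |z| ^ k))
    (μ v : ℝ) (hv : 0 < v) :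
    deriv (fun w : ℝ => ∫ z : ℝ, f z * gaussDensityV z μ w) v =
      (1 / 2) * ∫ z : ℝ, deriv (deriv f) z * gaussDensityV z μ v := by
  obtain ⟨C, k, hCk⟩ := hgrowth
  have hcf : Continuous f := hf.continuous
  have h2 : ContDiff ℝ (1 + 1) f := by rwa [one_add_one_eq_two]
  have h1 : ContDiff ℝ 1 (deriv f) := (contDiff_succ_iff_deriv.mp h2).2.2
  have h1' : ContDiff ℝ (0 + 1) (deriv f) := by rwa [zero_add]
  have hcf' : Continuous (deriv f) := h1.continuous
  have hcf'' : Continuous (deriv (deriv f)) :=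
    contDiff_zero.mp (contDiff_succ_iff_deriv.mp h1').2.2
  have hdf : Differentiable ℝ f := hf.differentiable two_ne_zero
  have hdf' : Differentiable ℝ (deriv f) := h1.differentiable one_ne_zero
  obtain ⟨D1, hD1, hb1⟩ := growth_reduce hcf fun z => (hCk z).1
  obtain ⟨D2, hD2, hb2⟩ := growth_reduce hcf' fun z => (hCk z).2.1
  obtain ⟨D3, hD3, hb3⟩ := growth_reduce hcf'' fun z => (hCk z).2.2
  set n := ⌈k⌉₊ with hn
  set D := max D1 (max D2 D3) with hDdef
  have hD0 : 0 ≤ D := le_trans hD1 (le_max_left _ _)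
  have hbf : ∀ z, |f z| ≤ D * (1 + |z| ^ n) := fun z =>
    le_trans (hb1 z) (mul_le_mul_of_nonneg_right (le_max_left _ _) (by positivity))
  have hbf' : ∀ z, |deriv f z| ≤ D * (1 + |z| ^ n) := fun z =>
    le_trans (hb2 z) (mul_le_mul_of_nonneg_right
      (le_trans (le_max_left _ _) (le_max_right _ _)) (by positivity))
  have hbf'' : ∀ z, |deriv (deriv f) z| ≤ D * (1 + |z| ^ n) := fun z =>
    le_trans (hb3 z) (mul_le_mul_of_nonneg_right
      (le_trans (le_max_right _ _) (le_max_right _ _)) (by positivity))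
  -- Step A : differentiate under the integral sign
  set K : ℝ := D * (3 * (2 * (2 / v ^ 2) + 2 * (2 / v ^ 2) * μ ^ 2 + 1 / v)) with hKdef
  have hK0 : 0 ≤ K := mul_nonneg hD0 (by positivity)
  have hball : ∀ w ∈ Metric.ball v (v / 2), v / 2 < w ∧ w < 3 * v / 2 := by
    intro w hw
    rw [Metric.mem_ball, Real.dist_eq, abs_sub_lt_iff] at hw
    constructor <;> linarith [hw.1, hw.2]
  have key := hasDerivAt_integral_of_dominated_loc_of_deriv_le (μ := volume)
    (F := fun w z => f z * gaussDensityV z μ w)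
    (F' := fun w z => f z * (gaussDensityV z μ w * ((z - μ) ^ 2 / (2 * w ^ 2) - 1 / (2 * w))))
    (x₀ := v) (s := Metric.ball v (v / 2))
    (bound := fun z => (K * (1 + |z| ^ (n + 2))) *
      (1 / Real.sqrt (π * v) * Real.exp (-(1 / (3 * v)) * (z - μ) ^ 2)))
    (Metric.ball_mem_nhds v (by positivity))
    (Filter.Eventually.of_forall fun w =>
      (hcf.mul (continuous_gaussDensityV μ w)).aestronglyMeasurable)
    (integrable_poly_mul_gaussDensity hcf.aestronglyMeasurable hbf μ hv)
    ((hcf.mul ((continuous_gaussDensityV μ v).mul (by fun_prop))).aestronglyMeasurable)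
    (Filter.Eventually.of_forall fun z => by
      intro w hw
      obtain ⟨hw1, hw2⟩ := hball w hw
      have hw0 : 0 < w := by linarith
      -- component bounds
      have A2 : 1 / Real.sqrt (2 * π * w) ≤ 1 / Real.sqrt (π * v) := by
        apply one_div_le_one_div_of_le (Real.sqrt_pos.mpr (by positivity))
        apply Real.sqrt_le_sqrt
        nlinarith [Real.pi_pos]
      have A3 : Real.exp (-(z - μ) ^ 2 / (2 * w)) ≤ Real.exp (-(1 / (3 * v)) * (z - μ) ^ 2) := by
        apply Real.exp_le_exp.mpr
        have h := mul_le_mul_of_nonneg_right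
          (one_div_le_one_div_of_le (by linarith : (0:ℝ) < 2 * w) (by linarith : 2 * w ≤ 3 * v))
          (sq_nonneg (z - μ))
        have e1 : -(z - μ) ^ 2 / (2 * w) = -(1 / (2 * w) * (z - μ) ^ 2) := by ring
        rw [e1]
        linarith
      have hw4 : v ^ 2 ≤ 4 * w ^ 2 := by nlinarith
      have s3a : (z - μ) ^ 2 / (2 * w ^ 2) ≤ 2 * (z - μ) ^ 2 / v ^ 2 := by
        rw [div_le_div_iff₀ (by positivity) (by positivity)]
        nlinarith [mul_le_mul_of_nonneg_left hw4 (sq_nonneg (z - μ))]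
      have s3b : 1 / (2 * w) ≤ 1 / v :=
        one_div_le_one_div_of_le hv (by linarith)
      have A4 : |(z - μ) ^ 2 / (2 * w ^ 2) - 1 / (2 * w)| ≤
          2 / v ^ 2 * (z - μ) ^ 2 + 1 / v := by
        rw [abs_le]
        have p1 : (0:ℝ) ≤ (z - μ) ^ 2 / (2 * w ^ 2) := by positivity
        have p2 : (0:ℝ) ≤ 1 / (2 * w) := by positivity
        have p3 : (0:ℝ) ≤ 2 / v ^ 2 * (z - μ) ^ 2 := by positivity
        have e2 : 2 * (z - μ) ^ 2 / v ^ 2 = 2 / v ^ 2 * (z - μ) ^ 2 := by ring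
        constructor <;> nlinarith [s3a, s3b]
      -- assemble
      have hGnn : (0:ℝ) ≤ 1 / Real.sqrt (2 * π * w) := by positivity
      have step1 : ‖f z * (gaussDensityV z μ w *
          ((z - μ) ^ 2 / (2 * w ^ 2) - 1 / (2 * w)))‖ =
          (|f z| * |(z - μ) ^ 2 / (2 * w ^ 2) - 1 / (2 * w)|) *
            (1 / Real.sqrt (2 * π * w) * Real.exp (-(z - μ) ^ 2 / (2 * w))) := by
        rw [Real.norm_eq_abs]
        unfold gaussDensityV
        rw [abs_mul, abs_mul, abs_mul, abs_of_nonneg hGnn,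
          abs_of_pos (Real.exp_pos _)]
        ring
      rw [step1]
      have bmq := bound_mul_quad hD0 hbf (A := 2 / v ^ 2) (B := 1 / v) μ
        (by positivity) (by positivity) z
      have first : |f z| * |(z - μ) ^ 2 / (2 * w ^ 2) - 1 / (2 * w)| ≤
          K * (1 + |z| ^ (n + 2)) := by
        calc |f z| * |(z - μ) ^ 2 / (2 * w ^ 2) - 1 / (2 * w)|
            ≤ |f z| * (2 / v ^ 2 * (z - μ) ^ 2 + 1 / v) :=
              mul_le_mul_of_nonneg_left A4 (abs_nonneg _)
          _ ≤ _ := by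
              rw [hKdef]
              calc |f z| * (2 / v ^ 2 * (z - μ) ^ 2 + 1 / v)
                  = |f z| * (2 / v ^ 2 * (z - μ) ^ 2 + 1 / v) := rfl
                _ ≤ _ := bmq
      have second : 1 / Real.sqrt (2 * π * w) * Real.exp (-(z - μ) ^ 2 / (2 * w)) ≤
          1 / Real.sqrt (π * v) * Real.exp (-(1 / (3 * v)) * (z - μ) ^ 2) :=
        mul_le_mul A2 A3 (Real.exp_pos _).le (by positivity)
      have hfirstnn : (0:ℝ) ≤ K * (1 + |z| ^ (n + 2)) := by positivity
      exact mul_le_mul first second (by positivity) hfirstnn)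
    (by
      have hE0 : (0:ℝ) ≤ K * (1 / Real.sqrt (π * v)) := by positivity
      have base := integrable_poly_gauss
        (h := fun z => K * (1 + |z| ^ (n + 2)) * (1 / Real.sqrt (π * v)))
        ((Continuous.aestronglyMeasurable (by fun_prop)))
        (C := K * (1 / Real.sqrt (π * v))) (n := n + 2)
        (fun z => by
          rw [abs_of_nonneg (by positivity)]
          exact le_of_eq (by ring))
        (b := 1 / (3 * v)) (by positivity) μ
      refine base.congr (Filter.Eventually.of_forall fun z => by ring))
    (Filter.Eventually.of_forall fun z => by
      intro w hw
      obtain ⟨hw1, hw2⟩ := hball w hw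
      exact (hasDerivAt_gauss_w z μ (by linarith)).const_mul (f z))
  have hderiv : HasDerivAt (fun w : ℝ => ∫ z : ℝ, f z * gaussDensityV z μ w)
      (∫ z : ℝ, f z * (gaussDensityV z μ v * ((z - μ) ^ 2 / (2 * v ^ 2) - 1 / (2 * v)))) v :=
    key.2
  rw [hderiv.deriv]
  clear hderiv key
  -- pointwise quadratic/linear factor bounds
  have hvne : v ≠ 0 := hv.ne'
  have hq : ∀ z : ℝ, |(z - μ) ^ 2 / v ^ 2 - 1 / v| ≤ 1 / v ^ 2 * (z - μ) ^ 2 + 1 / v := by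
    intro z
    have e : (z - μ) ^ 2 / v ^ 2 - 1 / v = 1 / v ^ 2 * (z - μ) ^ 2 - 1 / v := by ring
    rw [e, abs_le]
    have p1 : (0:ℝ) ≤ 1 / v ^ 2 * (z - μ) ^ 2 := by positivity
    have p2 : (0:ℝ) ≤ 1 / v := by positivity
    exact ⟨by linarith, by linarith⟩
  have hlin : ∀ z : ℝ, |(-(z - μ) / v)| ≤ 1 / (2 * v) * (z - μ) ^ 2 + 1 / (2 * v) := by
    intro z
    rw [abs_div, abs_neg, abs_of_pos hv, div_le_iff₀ hv]
    have e : (1 / (2 * v) * (z - μ) ^ 2 + 1 / (2 * v)) * v = ((z - μ) ^ 2 + 1) / 2 := by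
      field_simp
    rw [e]
    nlinarith [sq_abs (z - μ), abs_nonneg (z - μ), sq_nonneg (|z - μ| - 1)]
  -- integrability of all the integration-by-parts ingredients
  have J1 : Integrable fun z => f z * (gaussDensityV z μ v * ((z - μ) ^ 2 / v ^ 2 - 1 / v)) := by
    have base := integrable_poly_mul_gaussDensity
      (h := fun z => f z * ((z - μ) ^ 2 / v ^ 2 - 1 / v))
      (Continuous.aestronglyMeasurable (by fun_prop))
      (C := D * (3 * (2 * (1 / v ^ 2) + 2 * (1 / v ^ 2) * μ ^ 2 + 1 / (2 * v) + 1 / v)))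
      (m := n + 2)
      (fun z => by
        rw [abs_mul]
        calc |f z| * |(z - μ) ^ 2 / v ^ 2 - 1 / v|
            ≤ |f z| * (1 / v ^ 2 * (z - μ) ^ 2 + 1 / v) :=
              mul_le_mul_of_nonneg_left (hq z) (abs_nonneg _)
          _ ≤ D * (3 * (2 * (1 / v ^ 2) + 2 * (1 / v ^ 2) * μ ^ 2 + 1 / v)) *
              (1 + |z| ^ (n + 2)) :=
              bound_mul_quad hD0 hbf μ (by positivity) (by positivity) z
          _ ≤ _ := by
              have : (0:ℝ) ≤ 1 + |z| ^ (n + 2) := by positivity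
              have h1 : D * (3 * (2 * (1 / v ^ 2) + 2 * (1 / v ^ 2) * μ ^ 2 + 1 / v)) ≤
                  D * (3 * (2 * (1 / v ^ 2) + 2 * (1 / v ^ 2) * μ ^ 2 + 1 / (2 * v) + 1 / v)) := by
                apply mul_le_mul_of_nonneg_left _ hD0
                have : (0:ℝ) ≤ 1 / (2 * v) := by positivity
                linarith
              exact mul_le_mul_of_nonneg_right h1 this)
      μ hv
    exact base.congr (Filter.Eventually.of_forall fun z => by ring)
  have mkLin : ∀ g : ℝ → ℝ, Continuous g → (∀ z, |g z| ≤ D * (1 + |z| ^ n)) →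
      Integrable fun z => g z * (gaussDensityV z μ v * (-(z - μ) / v)) := by
    intro g hgc hgb
    have base := integrable_poly_mul_gaussDensity
      (h := fun z => g z * (-(z - μ) / v))
      (Continuous.aestronglyMeasurable (by fun_prop))
      (C := D * (3 * (2 * (1 / (2 * v)) + 2 * (1 / (2 * v)) * μ ^ 2 + 1 / (2 * v))))
      (m := n + 2)
      (fun z => by
        rw [abs_mul]
        calc |g z| * |(-(z - μ) / v)|
            ≤ |g z| * (1 / (2 * v) * (z - μ) ^ 2 + 1 / (2 * v)) :=
              mul_le_mul_of_nonneg_left (hlin z) (abs_nonneg _)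
          _ ≤ _ := bound_mul_quad hD0 hgb μ (by positivity) (by positivity) z)
      μ hv
    exact base.congr (Filter.Eventually.of_forall fun z => by ring)
  have J2 : Integrable fun z => deriv f z * (gaussDensityV z μ v * (-(z - μ) / v)) :=
    mkLin (deriv f) hcf' hbf'
  have J3 : Integrable fun z => f z * (gaussDensityV z μ v * (-(z - μ) / v)) :=
    mkLin f hcf hbf
  have J4 : Integrable fun z => deriv (deriv f) z * gaussDensityV z μ v :=
    integrable_poly_mul_gaussDensity hcf''.aestronglyMeasurable hbf'' μ hv
  have J5 : Integrable fun z => deriv f z * gaussDensityV z μ v :=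
    integrable_poly_mul_gaussDensity hcf'.aestronglyMeasurable hbf' μ hv
  -- integration by parts, twice
  have IBP1 : (∫ z : ℝ, f z * (gaussDensityV z μ v * ((z - μ) ^ 2 / v ^ 2 - 1 / v))) =
      -∫ z : ℝ, deriv f z * (gaussDensityV z μ v * (-(z - μ) / v)) :=
    MeasureTheory.integral_mul_deriv_eq_deriv_mul_of_integrable
      (u := f) (u' := deriv f)
      (v := fun z => gaussDensityV z μ v * (-(z - μ) / v))
      (v' := fun z => gaussDensityV z μ v * ((z - μ) ^ 2 / v ^ 2 - 1 / v))
      (fun x _ => (hdf x).hasDerivAt) (fun x _ => hasDerivAt_gauss_z' μ hv x) J1 J2 J3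
  have IBP2 : (∫ z : ℝ, deriv f z * (gaussDensityV z μ v * (-(z - μ) / v))) =
      -∫ z : ℝ, deriv (deriv f) z * gaussDensityV z μ v :=
    MeasureTheory.integral_mul_deriv_eq_deriv_mul_of_integrable
      (u := deriv f) (u' := deriv (deriv f))
      (v := fun z => gaussDensityV z μ v)
      (v' := fun z => gaussDensityV z μ v * (-(z - μ) / v))
      (fun x _ => (hdf' x).hasDerivAt) (fun x _ => hasDerivAt_gauss_z μ hv x) J2 J4 J5
  have e0 : (fun z => f z * (gaussDensityV z μ v * ((z - μ) ^ 2 / (2 * v ^ 2) - 1 / (2 * v)))) =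
      fun z => (1 / 2) * (f z * (gaussDensityV z μ v * ((z - μ) ^ 2 / v ^ 2 - 1 / v))) := by
    funext z
    field_simp
  rw [e0, MeasureTheory.integral_const_mul, IBP1, IBP2]
  ring
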